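/- For the free flow with S₀(x₀,y₀) = x₀⁵ + x₀⁶ y₀, the caustic has a point of swallowtail perestroika at the critical time t̃ = (4/7)√2 (33/7)^{3/4}: for t < t̃ the cusp equation has no real solutions with λ ≠ 0, while for t > t̃ it has two, and at t = t̃ the pre-parameterized caustic x_t(λ) satisfies x_{t̃}'(λ̃) = x_{t̃}''(λ̃) = 0 at the corresponding λ̃ ≠ 0. -/

import Mathlib

/-- The free flow map for `S₀(x₀,y₀) = x₀⁵ + x₀⁶ y₀`:
`Φ_t(x₀,y₀) = (x₀ + t(5x₀⁴ + 6x₀⁵y₀), y₀ + t x₀⁶)`. -/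
noncomputable def swFlow (t : ℝ) (p : ℝ × ℝ) : ℝ × ℝ :=
  (p.1 + t * (5 * p.1 ^ 4 + 6 * p.1 ^ 5 * p.2), p.2 + t * p.1 ^ 6)

/-- The pre-caustic `{det DΦ_t = 0}` solved for `y₀`:
`y₀ = (36 t² x₀¹⁰ − 1 − 20 t x₀³)/(30 t x₀⁴)`. -/
noncomputable def swPreCaustic (t lam : ℝ) : ℝ :=
  (36 * t ^ 2 * lam ^ 10 - 1 - 20 * t * lam ^ 3) / (30 * t * lam ^ 4)

/-- The pre-parameterisation `x_t(λ)` of the caustic. -/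
noncomputable def swCaustic (t : ℝ) (lam : ℝ) : ℝ × ℝ :=
  swFlow t (lam, swPreCaustic t lam)

/-! ### Auxiliary machinery -/

/-- The cusp polynomial: `deriv (swCaustic t) λ = 0 ↔ gf t λ = 0` for `t, λ ≠ 0`. -/
noncomputable def gf (t l : ℝ) : ℝ := 99*t^2*l^10 + 5*t*l^3 + 1

/-- The cusp polynomial after the substitution `λ = -μ`. -/
noncomputable def Gf (t m : ℝ) : ℝ := 99*t^2*m^10 - 5*t*m^3 + 1

lemma gf_eq_Gf (t l : ℝ) : gf t l = Gf t (-l) := by unfold gf Gf; ring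

lemma hasDerivAt_Gf (t x : ℝ) : HasDerivAt (Gf t) (990*t^2*x^9 - 15*t*x^2) x := by
  have h := (((hasDerivAt_pow 10 x).const_mul (99*t^2)).sub
      ((hasDerivAt_pow 3 x).const_mul (5*t))).add_const 1
  unfold Gf
  convert h using 1
  all_goals first | rfl | (norm_num; ring)

lemma hasDerivAt_gf (t x : ℝ) : HasDerivAt (gf t) (990*t^2*x^9 + 15*t*x^2) x := by
  have h := (((hasDerivAt_pow 10 x).const_mul (99*t^2)).add
      ((hasDerivAt_pow 3 x).const_mul (5*t))).add_const 1
  unfold gf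
  convert h using 1
  all_goals first | rfl | (norm_num; ring)

lemma hasDerivAt_swCaustic (t l : ℝ) (ht : t ≠ 0) (hl : l ≠ 0) :
    HasDerivAt (swCaustic t) ((4/5)*gf t l, 2/(15*t*l^5)*gf t l) l := by
  have hden : (30*t*l^4) ≠ 0 :=
    mul_ne_zero (mul_ne_zero (by norm_num) ht) (pow_ne_zero _ hl)
  have h3 : HasDerivAt (fun x : ℝ => x^3) (3*l^2) l := by simpa using hasDerivAt_pow 3 l
  have h4 : HasDerivAt (fun x : ℝ => x^4) (4*l^3) l := by simpa using hasDerivAt_pow 4 l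
  have h5 : HasDerivAt (fun x : ℝ => x^5) (5*l^4) l := by simpa using hasDerivAt_pow 5 l
  have h6 : HasDerivAt (fun x : ℝ => x^6) (6*l^5) l := by simpa using hasDerivAt_pow 6 l
  have h10 : HasDerivAt (fun x : ℝ => x^10) (10*l^9) l := by simpa using hasDerivAt_pow 10 l
  have hN : HasDerivAt (fun x : ℝ => 36*t^2*x^10 - 1 - 20*t*x^3)
      (36*t^2*(10*l^9) - 20*t*(3*l^2)) l := by
    have := ((h10.const_mul (36*t^2)).sub_const 1).sub (h3.const_mul (20*t))
    exact this
  have hD : HasDerivAt (fun x : ℝ => 30*t*x^4) (30*t*(4*l^3)) l := h4.const_mul (30*t)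
  have hQ : HasDerivAt (fun x : ℝ => (36*t^2*x^10 - 1 - 20*t*x^3)/(30*t*x^4))
      (((36*t^2*(10*l^9) - 20*t*(3*l^2))*(30*t*l^4)
        - (36*t^2*l^10 - 1 - 20*t*l^3)*(30*t*(4*l^3)))/(30*t*l^4)^2) l := hN.div hD hden
  have H1 : HasDerivAt (fun x : ℝ =>
      x + t*(5*x^4 + 6*x^5*((36*t^2*x^10 - 1 - 20*t*x^3)/(30*t*x^4))))
      (1 + t*(5*(4*l^3) + ((6*(5*l^4))*((36*t^2*l^10 - 1 - 20*t*l^3)/(30*t*l^4))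
        + (6*l^5)*(((36*t^2*(10*l^9) - 20*t*(3*l^2))*(30*t*l^4)
        - (36*t^2*l^10 - 1 - 20*t*l^3)*(30*t*(4*l^3)))/(30*t*l^4)^2)))) l :=
    (hasDerivAt_id l).add (((h4.const_mul 5).add ((h5.const_mul 6).mul hQ)).const_mul t)
  have H2 : HasDerivAt (fun x : ℝ =>
      (36*t^2*x^10 - 1 - 20*t*x^3)/(30*t*x^4) + t*x^6)
      ((((36*t^2*(10*l^9) - 20*t*(3*l^2))*(30*t*l^4)
        - (36*t^2*l^10 - 1 - 20*t*l^3)*(30*t*(4*l^3)))/(30*t*l^4)^2) + t*(6*l^5)) l :=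
    hQ.add (h6.const_mul t)
  have H := H1.prodMk H2
  have hfun : swCaustic t = (fun x : ℝ =>
      (x + t*(5*x^4 + 6*x^5*((36*t^2*x^10 - 1 - 20*t*x^3)/(30*t*x^4))),
       (36*t^2*x^10 - 1 - 20*t*x^3)/(30*t*x^4) + t*x^6)) := by
    funext x; simp [swCaustic, swFlow, swPreCaustic]
  rw [hfun]
  convert H using 2
  · unfold gf; field_simp; ring
  · unfold gf; field_simp; ring

lemma deriv_swCaustic (t l : ℝ) (ht : t ≠ 0) (hl : l ≠ 0) :
    deriv (swCaustic t) l = ((4/5)*gf t l, 2/(15*t*l^5)*gf t l) :=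
  (hasDerivAt_swCaustic t l ht hl).deriv

lemma deriv_swCaustic_eq_zero_iff (t l : ℝ) (ht : t ≠ 0) (hl : l ≠ 0) :
    deriv (swCaustic t) l = 0 ↔ gf t l = 0 := by
  rw [deriv_swCaustic t l ht hl]
  constructor
  · intro h
    have h1 : (4/5)*gf t l = 0 := by simpa using congrArg Prod.fst h
    linarith
  · intro h; rw [h]; simp [Prod.ext_iff]

noncomputable def mus (t : ℝ) : ℝ := (1/(66*t)) ^ ((1:ℝ)/7)

lemma mus_pos {t : ℝ} (ht : 0 < t) : 0 < mus t :=
  Real.rpow_pos_of_pos (by positivity) _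

lemma mus_pow7 {t : ℝ} (ht : 0 < t) : 66*t*(mus t)^7 = 1 := by
  have : (mus t)^(7:ℕ) = 1/(66*t) := by
    rw [mus, ← Real.rpow_natCast ((1/(66*t)) ^ ((1:ℝ)/7)) 7, ← Real.rpow_mul (by positivity)]
    norm_num
  rw [this]; field_simp

lemma Gf_cont (t : ℝ) : Continuous (Gf t) := by unfold Gf; fun_prop

lemma Gf_anti {t : ℝ} (ht : 0 < t) : StrictAntiOn (Gf t) (Set.Icc 0 (mus t)) := by
  apply strictAntiOn_of_deriv_neg (convex_Icc _ _) (Gf_cont t).continuousOn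
  intro x hx
  rw [interior_Icc] at hx
  rw [(hasDerivAt_Gf t x).deriv]
  have h7 : x^7 < (mus t)^7 := pow_lt_pow_left₀ hx.2 (le_of_lt hx.1) (by norm_num)
  have hm := mus_pow7 ht
  have hlt : 66*t*x^7 < 1 := by
    nlinarith [mul_lt_mul_of_pos_left h7 (by linarith : (0:ℝ) < 66*t)]
  have hpos : 0 < 15*t*x^2 := by nlinarith [pow_pos hx.1 2]
  have heq : 990*t^2*x^9 - 15*t*x^2 = 15*t*x^2*(66*t*x^7-1) := by ring
  rw [heq]
  exact mul_neg_of_pos_of_neg hpos (by linarith)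

lemma Gf_mono {t : ℝ} (ht : 0 < t) : StrictMonoOn (Gf t) (Set.Ici (mus t)) := by
  apply strictMonoOn_of_deriv_pos (convex_Ici _) (Gf_cont t).continuousOn
  intro x hx
  rw [interior_Ici] at hx
  rw [(hasDerivAt_Gf t x).deriv]
  have hx0 : 0 < x := lt_trans (mus_pos ht) hx
  have h7 : (mus t)^7 < x^7 := pow_lt_pow_left₀ hx (le_of_lt (mus_pos ht)) (by norm_num)
  have hm := mus_pow7 ht
  have hlt : 1 < 66*t*x^7 := by
    nlinarith [mul_lt_mul_of_pos_left h7 (by linarith : (0:ℝ) < 66*t)]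
  have hpos : 0 < 15*t*x^2 := by nlinarith [pow_pos hx0 2]
  have heq : 990*t^2*x^9 - 15*t*x^2 = 15*t*x^2*(66*t*x^7-1) := by ring
  rw [heq]
  exact mul_pos hpos (by linarith)

lemma Gf_at_mus {t : ℝ} (ht : 0 < t) : Gf t (mus t) = 1 - (7/2)*t*(mus t)^3 := by
  have hm := mus_pow7 ht
  unfold Gf
  linear_combination (3/2*t*(mus t)^3) * hm

lemma tmus_pow7 {t : ℝ} (ht : 0 < t) : (t*(mus t)^3)^7 = t^4 / 287496 := by
  have hm := mus_pow7 ht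
  have hm3 : 287496*t^3*(mus t)^21 = 1 := by
    linear_combination (4356*t^2*(mus t)^14 + 66*t*(mus t)^7 + 1) * hm
  field_simp
  linear_combination hm3

lemma tmus_lt {t : ℝ} (ht : 0 < t) (h : t^4 < 36799488/823543) : t*(mus t)^3 < 2/7 := by
  have h7 := tmus_pow7 ht
  have hnn : 0 ≤ t*(mus t)^3 := le_of_lt (mul_pos ht (pow_pos (mus_pos ht) 3))
  have hlt : (t*(mus t)^3)^7 < (2/7:ℝ)^7 := by
    rw [h7]; norm_num; linarith
  exact (pow_lt_pow_iff_left₀ hnn (by norm_num) (by norm_num)).mp hlt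

lemma tmus_gt {t : ℝ} (ht : 0 < t) (h : 36799488/823543 < t^4) : 2/7 < t*(mus t)^3 := by
  have h7 := tmus_pow7 ht
  have hnn : 0 ≤ t*(mus t)^3 := le_of_lt (mul_pos ht (pow_pos (mus_pos ht) 3))
  have hlt : (2/7:ℝ)^7 < (t*(mus t)^3)^7 := by
    rw [h7]; norm_num; linarith
  exact (pow_lt_pow_iff_left₀ (by norm_num) hnn (by norm_num)).mp hlt

lemma tt_pos : 0 < (4/7) * Real.sqrt 2 * ((33/7 : ℝ) ^ ((3:ℝ)/4)) := by
  have h1 : 0 < Real.sqrt 2 := Real.sqrt_pos.mpr (by norm_num)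
  have h2 : 0 < (33/7 : ℝ) ^ ((3:ℝ)/4) := Real.rpow_pos_of_pos (by norm_num) _
  positivity

lemma tt_pow4 : ((4/7) * Real.sqrt 2 * ((33/7 : ℝ) ^ ((3:ℝ)/4)))^4
    = 36799488/823543 := by
  have h2 : Real.sqrt 2 ^ 2 = 2 := Real.sq_sqrt (by norm_num)
  have h33 : ((33/7:ℝ) ^ ((3:ℝ)/4))^(4:ℕ) = (33/7:ℝ)^(3:ℕ) := by
    rw [← Real.rpow_natCast ((33/7:ℝ) ^ ((3:ℝ)/4)) 4, ← Real.rpow_mul (by norm_num)]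
    norm_num
  have expand : ((4/7) * Real.sqrt 2 * ((33/7 : ℝ) ^ ((3:ℝ)/4)))^4
      = (4/7:ℝ)^4 * (Real.sqrt 2 ^ 2)^2 * (((33/7:ℝ) ^ ((3:ℝ)/4))^(4:ℕ)) := by ring
  rw [expand, h2, h33]; norm_num

lemma lt_cube {tt : ℝ} (htt : 0 < tt) :
    (-((2/(7*tt)) ^ ((1:ℝ)/3)))^3 = -(2/(7*tt)) := by
  have h : ((2/(7*tt)) ^ ((1:ℝ)/3))^(3:ℕ) = 2/(7*tt) := by
    rw [← Real.rpow_natCast ((2/(7*tt)) ^ ((1:ℝ)/3)) 3, ← Real.rpow_mul (by positivity)]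
    norm_num
  calc (-((2/(7*tt)) ^ ((1:ℝ)/3)))^3 = -(((2/(7*tt)) ^ ((1:ℝ)/3))^(3:ℕ)) := by ring
  _ = -(2/(7*tt)) := by rw [h]

lemma lt_pow7 {tt : ℝ} (htt : 0 < tt) (htt4 : tt^4 = 36799488/823543) :
    (-((2/(7*tt)) ^ ((1:ℝ)/3)))^7 = -(1/(66*tt)) := by
  set a : ℝ := (2/(7*tt)) ^ ((1:ℝ)/3) with ha
  have hap : 0 < a := Real.rpow_pos_of_pos (by positivity) _
  have ha3 : a^3 = 2/(7*tt) := by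
    rw [ha, ← Real.rpow_natCast ((2/(7*tt)) ^ ((1:ℝ)/3)) 3, ← Real.rpow_mul (by positivity)]
    norm_num
  have key : (a^7)^3 = (1/(66*tt))^3 := by
    have h1 : (a^7)^3 = (a^3)^7 := by ring
    rw [h1, ha3, div_pow, div_pow, div_eq_div_iff (by positivity) (by positivity)]
    linear_combination (-823543*tt^3) * htt4
  have := pow_left_inj₀ (by positivity : (0:ℝ) ≤ a^7) (by positivity : (0:ℝ) ≤ 1/(66*tt))
      (by norm_num : (3:ℕ) ≠ 0) |>.mp key
  rw [show (-a)^7 = -(a^7) by ring, this]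

/-- for the free flow with `S₀(x₀,y₀) = x₀⁵ + x₀⁶ y₀`, the caustic has a
point of swallowtail perestroika at the critical time `t̃ = (4/7)√2 (33/7)^{3/4}`:
for `0 < t < t̃` there are no generalised cusps with `λ ≠ 0`, for `t > t̃` there are
exactly two, and at `t = t̃` there is `λ̃ ≠ 0` with `x_{t̃}'(λ̃) = x_{t̃}''(λ̃) = 0`. -/
theorem swallowtail_perestroika_critical_time :
    ∀ ttilde : ℝ, ttilde = (4 / 7) * Real.sqrt 2 * ((33 / 7 : ℝ) ^ ((3 : ℝ) / 4)) →
    ((∀ t : ℝ, 0 < t → t < ttilde →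
        ∀ lam : ℝ, lam ≠ 0 → deriv (swCaustic t) lam ≠ 0) ∧
     (∀ t : ℝ, ttilde < t →
        ∃ lam₁ lam₂ : ℝ, lam₁ ≠ lam₂ ∧ lam₁ ≠ 0 ∧ lam₂ ≠ 0 ∧
          deriv (swCaustic t) lam₁ = 0 ∧ deriv (swCaustic t) lam₂ = 0 ∧
          ∀ lam : ℝ, lam ≠ 0 → deriv (swCaustic t) lam = 0 →
            lam = lam₁ ∨ lam = lam₂) ∧
     (∃ lamtilde : ℝ, lamtilde ≠ 0 ∧
        deriv (swCaustic ttilde) lamtilde = 0 ∧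
        deriv (deriv (swCaustic ttilde)) lamtilde = 0)) := by
  intro ttilde httdef
  have htt0 : 0 < ttilde := by rw [httdef]; exact tt_pos
  have htt4 : ttilde^4 = 36799488/823543 := by rw [httdef]; exact tt_pow4
  have httne : ttilde ≠ 0 := ne_of_gt htt0
  refine ⟨?_, ?_, ?_⟩
  · -- Part 1 : no cusps for t < ttilde
    intro t ht0 httlt lam hlam hd
    have htne : t ≠ 0 := ne_of_gt ht0
    have ht4 : t^4 < 36799488/823543 := by
      rw [← htt4]; exact pow_lt_pow_left₀ httlt (le_of_lt ht0) (by norm_num)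
    have hg : gf t lam = 0 := (deriv_swCaustic_eq_zero_iff t lam htne hlam).mp hd
    rcases lt_or_gt_of_ne hlam with hneg | hpos
    · have hmu : 0 < -lam := by linarith
      have hmin : 0 < Gf t (mus t) := by
        rw [Gf_at_mus ht0]
        have := tmus_lt ht0 ht4
        linarith
      have hGlam : Gf t (-lam) = 0 := by rw [← gf_eq_Gf]; exact hg
      rcases le_or_gt (-lam) (mus t) with hle | hgt
      · rcases eq_or_lt_of_le hle with heq | hlt2
        · rw [heq] at hGlam; linarith
        · have := Gf_anti ht0 ⟨hmu.le, hle⟩ ⟨(mus_pos ht0).le, le_refl _⟩ hlt2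
          linarith
      · have := Gf_mono ht0 (Set.mem_Ici.mpr (le_refl _)) (Set.mem_Ici.mpr hgt.le) hgt
        linarith
    · have : 0 < gf t lam := by
        unfold gf
        nlinarith [mul_pos ht0 (pow_pos hpos 3),
          mul_nonneg (by positivity : (0:ℝ) ≤ 99*t^2) (by positivity : (0:ℝ) ≤ lam^10)]
      linarith
  · -- Part 2 : exactly two cusps for t > ttilde
    intro t httlt
    have ht0 : 0 < t := lt_trans htt0 httlt
    have htne : t ≠ 0 := ne_of_gt ht0
    have ht4 : 36799488/823543 < t^4 := by
      rw [← htt4]; exact pow_lt_pow_left₀ httlt htt0.le (by norm_num)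
    have hμpos := mus_pos ht0
    have hmin : Gf t (mus t) < 0 := by
      rw [Gf_at_mus ht0]
      have := tmus_gt ht0 ht4
      linarith
    set M : ℝ := mus t + 1 + 5/(99*t) with hM
    have hfrac : 0 < 5/(99*t) := div_pos (by norm_num) (by linarith)
    have hM1 : 1 ≤ M := by simp only [hM]; linarith
    have hMmus : mus t ≤ M := by simp only [hM]; linarith
    have hM5 : 5/(99*t) ≤ M := by simp only [hM]; linarith
    have hM0 : 0 < M := by linarith
    have hGM : 0 < Gf t M := by
      have hM7 : M ≤ M^7 := le_self_pow₀ hM1 (by norm_num)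
      have hnn : (0:ℝ) ≤ 99*t^2*M^3 :=
        mul_nonneg (by positivity) (pow_nonneg hM0.le 3)
      have h1 : 5*t*M^3 ≤ 99*t^2*M^3*M := by
        have e : (99*t^2*M^3)*(5/(99*t)) = 5*t*M^3 := by field_simp
        calc 5*t*M^3 = (99*t^2*M^3)*(5/(99*t)) := e.symm
        _ ≤ (99*t^2*M^3)*M := mul_le_mul_of_nonneg_left hM5 hnn
      have h2 : 99*t^2*M^3*M ≤ 99*t^2*M^3*M^7 := mul_le_mul_of_nonneg_left hM7 hnn
      have e10 : 99*t^2*M^10 = 99*t^2*M^3*M^7 := by ring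
      unfold Gf
      linarith
    have hG0 : Gf t 0 = 1 := by simp [Gf]
    obtain ⟨μ₁, hμ₁mem, hμ₁⟩ :=
      intermediate_value_Icc' hμpos.le (Gf_cont t).continuousOn
        (show (0:ℝ) ∈ Set.Icc (Gf t (mus t)) (Gf t 0) from by
          rw [hG0]; exact ⟨hmin.le, by norm_num⟩)
    obtain ⟨μ₂, hμ₂mem, hμ₂⟩ :=
      intermediate_value_Icc hMmus (Gf_cont t).continuousOn
        (show (0:ℝ) ∈ Set.Icc (Gf t (mus t)) (Gf t M) from ⟨hmin.le, hGM.le⟩)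
    have hμ₁ne0 : μ₁ ≠ 0 := by
      intro h; rw [h, hG0] at hμ₁; norm_num at hμ₁
    have hμ₁pos : 0 < μ₁ := lt_of_le_of_ne hμ₁mem.1 (Ne.symm hμ₁ne0)
    have hμ₂gt : mus t < μ₂ := by
      refine lt_of_le_of_ne hμ₂mem.1 ?_
      intro h; rw [← h] at hμ₂; linarith
    have hμ₂pos : 0 < μ₂ := lt_trans hμpos hμ₂gt
    have h12 : μ₁ < μ₂ := lt_of_le_of_lt hμ₁mem.2 hμ₂gt
    refine ⟨-μ₁, -μ₂, ?_, neg_ne_zero.mpr (ne_of_gt hμ₁pos),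
      neg_ne_zero.mpr (ne_of_gt hμ₂pos), ?_, ?_, ?_⟩
    · intro h
      exact (ne_of_lt h12) (neg_injective h)
    · exact (deriv_swCaustic_eq_zero_iff t _ htne (neg_ne_zero.mpr (ne_of_gt hμ₁pos))).mpr
        (by rw [gf_eq_Gf, neg_neg]; exact hμ₁)
    · exact (deriv_swCaustic_eq_zero_iff t _ htne (neg_ne_zero.mpr (ne_of_gt hμ₂pos))).mpr
        (by rw [gf_eq_Gf, neg_neg]; exact hμ₂)
    · intro lam hlam hd
      have hg : gf t lam = 0 := (deriv_swCaustic_eq_zero_iff t lam htne hlam).mp hd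
      have hneg : lam < 0 := by
        rcases lt_or_gt_of_ne hlam with h | h
        · exact h
        · exfalso
          have : 0 < gf t lam := by
            unfold gf
            nlinarith [mul_pos ht0 (pow_pos h 3),
              mul_nonneg (by positivity : (0:ℝ) ≤ 99*t^2) (by positivity : (0:ℝ) ≤ lam^10)]
          linarith
      have hμ : 0 < -lam := by linarith
      have hGμ : Gf t (-lam) = 0 := by rw [← gf_eq_Gf]; exact hg
      rcases le_or_gt (-lam) (mus t) with hle | hgt2
      · left
        have heq : -lam = μ₁ :=
          (Gf_anti ht0).injOn ⟨hμ.le, hle⟩ ⟨hμ₁mem.1, hμ₁mem.2⟩ (hGμ.trans hμ₁.symm)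
        rw [show lam = -(-lam) from (neg_neg lam).symm, heq]
      · right
        have heq : -lam = μ₂ :=
          (Gf_mono ht0).injOn (Set.mem_Ici.mpr hgt2.le) (Set.mem_Ici.mpr hμ₂mem.1)
            (hGμ.trans hμ₂.symm)
        rw [show lam = -(-lam) from (neg_neg lam).symm, heq]
  · -- Part 3 : swallowtail point at t = ttilde
    set lt : ℝ := -((2/(7*ttilde)) ^ ((1:ℝ)/3)) with hltdef
    have hap : 0 < (2/(7*ttilde)) ^ ((1:ℝ)/3) :=
      Real.rpow_pos_of_pos (div_pos (by norm_num) (by linarith)) _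
    have hltneg : lt < 0 := by rw [hltdef]; linarith
    have hltne : lt ≠ 0 := ne_of_lt hltneg
    have h3 : lt^3 = -(2/(7*ttilde)) := lt_cube htt0
    have h7 : lt^7 = -(1/(66*ttilde)) := lt_pow7 htt0 htt4
    have hg0 : gf ttilde lt = 0 := by
      unfold gf
      have h10 : lt^10 = lt^3*lt^7 := by ring
      rw [h10, h3, h7]
      field_simp
      ring
    have hgd0 : 990*ttilde^2*lt^9 + 15*ttilde*lt^2 = 0 := by
      have h9 : lt^9 = lt^2*lt^7 := by ring
      rw [h9, h7]
      field_simp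
      ring
    refine ⟨lt, hltne, ?_, ?_⟩
    · exact (deriv_swCaustic_eq_zero_iff ttilde lt httne hltne).mpr hg0
    · have hev : deriv (swCaustic ttilde) =ᶠ[nhds lt]
          (fun l => ((4/5)*gf ttilde l, 2/(15*ttilde*l^5)*gf ttilde l)) := by
        filter_upwards [compl_singleton_mem_nhds hltne] with x hx
        exact (hasDerivAt_swCaustic ttilde x httne hx).deriv
      rw [hev.deriv_eq]
      have hd5 : (15*ttilde*lt^5) ≠ 0 :=
        mul_ne_zero (mul_ne_zero (by norm_num) httne) (pow_ne_zero _ hltne)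
      have hDen : HasDerivAt (fun x : ℝ => 15*ttilde*x^5) (15*ttilde*(5*lt^4)) lt := by
        have h5 : HasDerivAt (fun x : ℝ => x^5) (5*lt^4) lt := by
          simpa using hasDerivAt_pow 5 lt
        exact h5.const_mul (15*ttilde)
      have hquot : HasDerivAt (fun x : ℝ => 2/(15*ttilde*x^5))
          ((0*(15*ttilde*lt^5) - 2*(15*ttilde*(5*lt^4)))/(15*ttilde*lt^5)^2) lt :=
        (hasDerivAt_const lt 2).div hDen hd5
      have hg' := hasDerivAt_gf ttilde lt
      have hD2 : HasDerivAt (fun l => 2/(15*ttilde*l^5)*gf ttilde l)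
          (((0*(15*ttilde*lt^5) - 2*(15*ttilde*(5*lt^4)))/(15*ttilde*lt^5)^2) * gf ttilde lt
            + (2/(15*ttilde*lt^5)) * (990*ttilde^2*lt^9 + 15*ttilde*lt^2)) lt :=
        hquot.mul hg'
      have hD1 : HasDerivAt (fun l => (4/5)*gf ttilde l)
          ((4/5)*(990*ttilde^2*lt^9 + 15*ttilde*lt^2)) lt := hg'.const_mul (4/5)
      rw [(hD1.prodMk hD2).deriv, hg0, hgd0]
      simp [Prod.ext_iff]
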